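/- Let C be a nonempty closed convex subset of a real Hilbert space H and let F : C × C → ℝ be a bifunction satisfying (A1)–(A4). Then for every r > 0 and every x ∈ H there exists z ∈ C such that F(z, y) + (1/r)⟨y − z, z − x⟩ ≥ 0 for all y ∈ C. -/

import Mathlib

open Filter Topology Set
open scoped RealInnerProductSpace

lemma aux_quad {H : Type*} [NormedAddCommGroup H] [InnerProductSpace ℝ H]
    (x y a b : H) {s t : ℝ} (hs : 0 ≤ s) (ht : 0 ≤ t) (hst : s + t = 1) :
    ⟪(s•a+t•b) - y, (s•a+t•b) - x⟫ ≤ s*⟪a-y,a-x⟫ + t*⟪b-y,b-x⟫ := by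
  obtain rfl : t = 1 - s := by linarith
  have hab : (0:ℝ) ≤ ⟪a - b, a - b⟫ := real_inner_self_nonneg
  have hc : ⟪b, a⟫ = ⟪a, b⟫ := real_inner_comm a b
  simp only [inner_sub_left, inner_sub_right, inner_add_left, inner_add_right,
    real_inner_smul_left, real_inner_smul_right] at *
  nlinarith [mul_nonneg (mul_nonneg hs ht) hab]

lemma aux_sublevel_closed {α : Type*} [TopologicalSpace α] {C : Set α} (hCcl : IsClosed C)
    {g : α → ℝ} (hg : LowerSemicontinuousOn g C) (c : ℝ) :
    IsClosed {w | w ∈ C ∧ g w ≤ c} := by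
  apply isClosed_of_closure_subset
  intro w hw
  have hwC : w ∈ C := by
    have h := closure_mono (fun z (hz : z ∈ {w | w ∈ C ∧ g w ≤ c}) => hz.1) hw
    rwa [hCcl.closure_eq] at h
  refine ⟨hwC, ?_⟩
  by_contra hlt
  push_neg at hlt
  have hev := hg w hwC c hlt
  have hne : (𝓝[{w | w ∈ C ∧ g w ≤ c}] w).NeBot := mem_closure_iff_nhdsWithin_neBot.1 hw
  have hev' : ∀ᶠ z in 𝓝[{w | w ∈ C ∧ g w ≤ c}] w, c < g z :=
    hev.filter_mono (nhdsWithin_mono w (fun z hz => hz.1))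
  obtain ⟨z, h1, h2⟩ := (hev'.and eventually_mem_nhdsWithin).exists
  exact absurd h2.2 (not_le.2 h1)

lemma aux_step1 {H : Type*} [NormedAddCommGroup H] [InnerProductSpace ℝ H]
    {C : Set H} (hCcl : IsClosed C) (hCcv : Convex ℝ C)
    {F : H → H → ℝ}
    (hF2 : ∀ x ∈ C, ∀ y ∈ C, F x y + F y x ≤ 0)
    (hF4 : ∀ x ∈ C, ConvexOn ℝ C (fun y => F x y) ∧ LowerSemicontinuousOn (fun y => F x y) C)
    {ρ : ℝ} (hρ : 0 < ρ) (x : H)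
    {n : ℕ} (hn : 0 < n) (y : Fin n → H) (hy : ∀ i, y i ∈ C) :
    ∃ z ∈ C, ∀ i, F (y i) z + ρ * ⟪z - y i, z - x⟫ ≤ 0 := by
  classical
  set Δ := stdSimplex ℝ (Fin n) with hΔdef
  set Z : (Fin n → ℝ) → H := fun l => ∑ i, l i • y i with hZ
  have hZcont : Continuous Z :=
    continuous_finset_sum _ fun i _ => (continuous_apply i).smul continuous_const
  have hZmem : ∀ l ∈ Δ, Z l ∈ C := fun l hl =>
    hCcv.sum_mem (fun i _ => hl.1 i) hl.2 (fun i _ => hy i)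
  set h : Fin n → (Fin n → ℝ) → ℝ :=
    fun i l => F (y i) (Z l) + ρ * ⟪Z l - y i, Z l - x⟫ with hh
  -- key inequality (a)
  have key : ∀ l ∈ Δ, ∑ i, l i * h i l ≤ 0 := by
    intro l hl
    have hsplit : ∑ i, l i * h i l
        = (∑ i, l i * F (y i) (Z l)) + ρ * (∑ i, l i * ⟪Z l - y i, Z l - x⟫) := by
      rw [Finset.mul_sum, ← Finset.sum_add_distrib]
      exact Finset.sum_congr rfl fun i _ => by simp only [hh]; ring
    have hinner : (∑ i, l i * ⟪Z l - y i, Z l - x⟫) = 0 := by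
      have h1 : ∀ i : Fin n, l i * ⟪Z l - y i, Z l - x⟫ = ⟪l i • (Z l - y i), Z l - x⟫ :=
        fun i => (real_inner_smul_left _ _ _).symm
      rw [Finset.sum_congr rfl fun i _ => h1 i, ← sum_inner]
      have hzero : (∑ i, l i • (Z l - y i)) = 0 := by
        simp only [smul_sub, Finset.sum_sub_distrib, ← Finset.sum_smul, hl.2, one_smul]
        simp [hZ]
      rw [hzero, inner_zero_left]
    have hjensen : ∀ i, F (y i) (Z l) ≤ ∑ j, l j * F (y i) (y j) := by
      intro i
      have := (hF4 (y i) (hy i)).1.map_sum_le (fun j (_ : j ∈ Finset.univ) => hl.1 j) hl.2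
        (fun j _ => hy j)
      simpa [smul_eq_mul] using this
    have hsum1 : ∑ i, l i * F (y i) (Z l) ≤ ∑ i, l i * ∑ j, l j * F (y i) (y j) :=
      Finset.sum_le_sum fun i _ => mul_le_mul_of_nonneg_left (hjensen i) (hl.1 i)
    have hdouble : ∑ i, l i * ∑ j, l j * F (y i) (y j) ≤ 0 := by
      have h2 : (∑ i, l i * ∑ j, l j * F (y i) (y j)) * 2
          = ∑ i, ∑ j, l i * l j * (F (y i) (y j) + F (y j) (y i)) := by
        have expand : (∑ i, l i * ∑ j, l j * F (y i) (y j))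
            = ∑ i, ∑ j, l i * (l j * F (y i) (y j)) :=
          Finset.sum_congr rfl fun i _ => Finset.mul_sum _ _ _
        have hcopy : (∑ i, ∑ j, l i * (l j * F (y i) (y j)))
            = ∑ i, ∑ j, l j * (l i * F (y j) (y i)) := Finset.sum_comm
        rw [mul_two, expand]
        nth_rewrite 2 [hcopy]
        rw [← Finset.sum_add_distrib]
        refine Finset.sum_congr rfl fun i _ => ?_
        rw [← Finset.sum_add_distrib]
        exact Finset.sum_congr rfl fun j _ => by ring
      have h3 : ∑ i : Fin n, ∑ j : Fin n, l i * l j * (F (y i) (y j) + F (y j) (y i)) ≤ 0 :=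
        Finset.sum_nonpos fun i _ => Finset.sum_nonpos fun j _ =>
          mul_nonpos_of_nonneg_of_nonpos (mul_nonneg (hl.1 i) (hl.1 j))
            (hF2 _ (hy i) _ (hy j))
      linarith
    calc ∑ i, l i * h i l
        = (∑ i, l i * F (y i) (Z l)) + ρ * (∑ i, l i * ⟪Z l - y i, Z l - x⟫) := hsplit
      _ = ∑ i, l i * F (y i) (Z l) := by rw [hinner, mul_zero, add_zero]
      _ ≤ ∑ i, l i * ∑ j, l j * F (y i) (y j) := hsum1
      _ ≤ 0 := hdouble
  -- epsilon solutions via separation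
  have heps : ∀ ε : ℝ, 0 < ε → ∃ l ∈ Δ, ∀ i, h i l ≤ ε := by
    intro ε hε
    by_contra hcon
    push_neg at hcon
    set U : Set (Fin n → ℝ) := {u | ∃ l ∈ Δ, ∀ i, h i l ≤ u i} with hU
    set V : Set (Fin n → ℝ) := univ.pi (fun _ => Iio ε) with hV
    have hVmem : ∀ c : ℝ, c < ε → (fun _ : Fin n => c) ∈ V := by
      intro c hc j _; simpa using hc
    have hVopen : IsOpen V := isOpen_set_pi finite_univ (fun i _ => isOpen_Iio)
    have hVconv : Convex ℝ V := convex_pi (fun i _ => convex_Iio ε)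
    have hUconv : Convex ℝ U := by
      rintro u ⟨l, hl, hlu⟩ u' ⟨l', hl', hlu'⟩ s t hs ht hst
      refine ⟨s • l + t • l', convex_stdSimplex ℝ _ hl hl' hs ht hst, fun i => ?_⟩
      have hZlin : Z (s • l + t • l') = s • Z l + t • Z l' := by
        simp only [hZ, Pi.add_apply, Pi.smul_apply, smul_eq_mul, add_smul, mul_smul,
          Finset.sum_add_distrib, Finset.smul_sum]
      have hFc := (hF4 (y i) (hy i)).1.2 (hZmem l hl) (hZmem l' hl') hs ht hst
      have hq := aux_quad x (y i) (Z l) (Z l') hs ht hst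
      have hq2 : ρ * ⟪(s • Z l + t • Z l') - y i, (s • Z l + t • Z l') - x⟫
          ≤ ρ * (s*⟪Z l - y i, Z l - x⟫ + t*⟪Z l' - y i, Z l' - x⟫) :=
        mul_le_mul_of_nonneg_left hq hρ.le
      have hcomb : h i (s • l + t • l') ≤ s * h i l + t * h i l' := by
        simp only [hh, hZlin]
        simp only [smul_eq_mul] at hFc
        calc F (y i) (s • Z l + t • Z l') + ρ * ⟪(s • Z l + t • Z l') - y i, (s • Z l + t • Z l') - x⟫
            ≤ (s * F (y i) (Z l) + t * F (y i) (Z l'))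
              + ρ * (s*⟪Z l - y i, Z l - x⟫ + t*⟪Z l' - y i, Z l' - x⟫) := add_le_add hFc hq2
          _ = s * (F (y i) (Z l) + ρ * ⟪Z l - y i, Z l - x⟫)
              + t * (F (y i) (Z l') + ρ * ⟪Z l' - y i, Z l' - x⟫) := by ring
      have := add_le_add (mul_le_mul_of_nonneg_left (hlu i) hs)
        (mul_le_mul_of_nonneg_left (hlu' i) ht)
      calc h i (s • l + t • l') ≤ s * h i l + t * h i l' := hcomb
        _ ≤ s * u i + t * u' i := this
        _ = (s • u + t • u') i := by simp [smul_eq_mul]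
    have hdisj : Disjoint V U := by
      rw [Set.disjoint_left]
      rintro u huV ⟨l, hl, hlu⟩
      obtain ⟨i, hi⟩ := hcon l hl
      have hui : u i < ε := by simpa using huV i (mem_univ i)
      exact absurd (le_trans (hlu i) hui.le) (not_le.2 hi)
    obtain ⟨f, u₀, hfV, hfU⟩ := geometric_hahn_banach_open hVconv hVopen hUconv hdisj
    set μ : Fin n → ℝ := fun i => f (fun j => if i = j then (1:ℝ) else 0) with hμ
    have hf : ∀ v : Fin n → ℝ, f v = ∑ i, v i * μ i := by
      intro v
      conv_lhs => rw [pi_eq_sum_univ v]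
      rw [map_sum]
      exact Finset.sum_congr rfl fun i _ => by rw [map_smul]; simp [hμ, smul_eq_mul]
    have hconst : ∀ c : ℝ, f (fun _ => c) = c * ∑ i, μ i := by
      intro c; rw [hf, Finset.mul_sum]
    have hμnonneg : ∀ i, 0 ≤ μ i := by
      intro i
      by_contra hneg; push_neg at hneg
      set tt := (u₀ - ((ε-1) * ∑ j, μ j) + 1)/(-μ i) with htt
      have h0 := hfV (fun _ => ε - 1) (hVmem _ (by linarith))
      rw [hconst] at h0
      have httpos : 0 < tt := div_pos (by linarith) (by linarith)
      have hvmem : (fun j => (ε-1) - tt * (if i = j then 1 else 0)) ∈ V := by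
        intro j _
        simp only [mem_Iio]
        split_ifs <;> linarith
      have h1 := hfV _ hvmem
      rw [hf] at h1
      have hcomp : ∑ j, ((ε-1) - tt*(if i = j then 1 else 0)) * μ j
          = (ε-1) * (∑ j, μ j) - tt * μ i := by
        have hterm : ∀ j, ((ε-1) - tt*(if i = j then 1 else 0)) * μ j
            = (ε-1) * μ j - tt * (if i = j then μ j else 0) := by
          intro j; split_ifs <;> ring
        rw [Finset.sum_congr rfl fun j _ => hterm j, Finset.sum_sub_distrib, ← Finset.mul_sum,
          ← Finset.mul_sum, Finset.sum_ite_eq Finset.univ i μ]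
        simp
      rw [hcomp] at h1
      have heqtt : tt * (-μ i) = u₀ - ((ε-1) * ∑ j, μ j) + 1 := by
        rw [htt, div_mul_cancel₀]
        linarith
      nlinarith
    have hΔne : (fun _ : Fin n => (n:ℝ)⁻¹) ∈ Δ := by
      constructor
      · intro i; positivity
      · simp only [Finset.sum_const, Finset.card_univ, Fintype.card_fin, nsmul_eq_mul]
        field_simp
    have hUelem : ∀ l ∈ Δ, (fun i => h i l) ∈ U := fun l hl => ⟨l, hl, fun i => le_rfl⟩
    have hμsum_nonneg : 0 ≤ ∑ i, μ i := Finset.sum_nonneg fun i _ => hμnonneg i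
    have hμsumpos : 0 < ∑ i, μ i := by
      rcases hμsum_nonneg.lt_or_eq with hpos | heq
      · exact hpos
      · exfalso
        have hall : ∀ i ∈ Finset.univ, μ i = 0 :=
          (Finset.sum_eq_zero_iff_of_nonneg (fun i _ => hμnonneg i)).1 heq.symm
        have hf0 : ∀ v, f v = 0 := fun v => by
          rw [hf]
          exact Finset.sum_eq_zero fun i _ => by rw [hall i (Finset.mem_univ i), mul_zero]
        have h1 := hfV (fun _ => ε - 1) (hVmem _ (by linarith))
        have h2 := hfU _ (hUelem _ hΔne)
        rw [hf0] at h1 h2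
        linarith
    have hεμ : ε * ∑ i, μ i ≤ u₀ := by
      by_contra hlt; push_neg at hlt
      set δ := (ε * ∑ i, μ i - u₀)/(2 * ∑ i, μ i) with hδ
      have hδpos : 0 < δ := div_pos (by linarith) (by linarith)
      have h1 := hfV (fun _ => ε - δ) (hVmem _ (by linarith))
      rw [hconst] at h1
      have h2 : δ * ∑ i, μ i = (ε * ∑ i, μ i - u₀)/2 := by
        rw [hδ]; field_simp
      nlinarith
    set lstar : Fin n → ℝ := fun i => μ i / ∑ j, μ j with hlstardef
    have hlstar : lstar ∈ Δ := by
      constructor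
      · intro i; exact div_nonneg (hμnonneg i) hμsum_nonneg
      · rw [← Finset.sum_div]
        field_simp
    have h1 := hfU _ (hUelem lstar hlstar)
    rw [hf] at h1
    have h2 := key lstar hlstar
    have h3 : ∑ i, (h i lstar) * μ i = (∑ j, μ j) * ∑ i, lstar i * h i lstar := by
      rw [Finset.mul_sum]
      refine Finset.sum_congr rfl fun i _ => ?_
      rw [hlstardef]
      field_simp
    have h4 : (∑ j, μ j) * (∑ i, lstar i * h i lstar) ≤ 0 :=
      mul_nonpos_of_nonneg_of_nonpos hμsum_nonneg h2
    nlinarith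
  -- compactness finish
  have hgl : ∀ i : Fin n, LowerSemicontinuousOn
      (fun w => F (y i) w + ρ * ⟪w - y i, w - x⟫) C := by
    intro i
    have hcont : Continuous (fun w : H => ρ * ⟪w - y i, w - x⟫) :=
      Continuous.mul continuous_const
        (Continuous.inner (continuous_id.sub continuous_const)
          (continuous_id.sub continuous_const))
    exact ((hF4 (y i) (hy i)).2).add (hcont.lowerSemicontinuous.lowerSemicontinuousOn C)
  set K : ℕ → Set (Fin n → ℝ) := fun m => {l | l ∈ Δ ∧ ∀ i, h i l ≤ 1/(m+1)} with hK
  have hKeq : ∀ m : ℕ, K m = Δ ∩ ⋂ i : Fin n,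
      Z ⁻¹' {w | w ∈ C ∧ F (y i) w + ρ * ⟪w - y i, w - x⟫ ≤ 1/(m+1)} := by
    intro m
    ext l
    simp only [hK, mem_setOf_eq, mem_inter_iff, mem_iInter, mem_preimage]
    constructor
    · rintro ⟨hl, hle⟩; exact ⟨hl, fun i => ⟨hZmem l hl, hle i⟩⟩
    · rintro ⟨hl, hle⟩; exact ⟨hl, fun i => (hle i).2⟩
  have hKclosed : ∀ m, IsClosed (K m) := by
    intro m
    rw [hKeq m]
    exact (isClosed_stdSimplex _ _).inter (isClosed_iInter fun i =>
      (aux_sublevel_closed hCcl (hgl i) _).preimage hZcont)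
  have hKne : ∀ m : ℕ, (K m).Nonempty := by
    intro m
    obtain ⟨l, hl, hle⟩ := heps (1/(m+1)) (by positivity)
    exact ⟨l, hl, hle⟩
  have hKnested : ∀ m, K (m+1) ⊆ K m := by
    intro m l hl
    refine ⟨hl.1, fun i => le_trans (hl.2 i) ?_⟩
    apply one_div_le_one_div_of_le
    · positivity
    · push_cast; linarith
  have hKcpt : IsCompact (K 0) :=
    IsCompact.of_isClosed_subset (isCompact_stdSimplex _ _) (hKclosed 0) (fun l hl => hl.1)
  obtain ⟨linf, hlinf⟩ := IsCompact.nonempty_iInter_of_sequence_nonempty_isCompact_isClosed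
    K hKnested hKne hKcpt hKclosed
  rw [mem_iInter] at hlinf
  have hDinf : linf ∈ Δ := (hlinf 0).1
  refine ⟨Z linf, hZmem _ hDinf, fun i => ?_⟩
  by_contra hpos; push_neg at hpos
  obtain ⟨m, hm⟩ := exists_nat_one_div_lt hpos
  exact absurd ((hlinf m).2 i) (not_le.2 (by exact_mod_cast hm))

lemma aux_minorant {H : Type*} [NormedAddCommGroup H] [InnerProductSpace ℝ H]
    {C : Set H} (hCcl : IsClosed C) {f : H → ℝ} (hcv : ConvexOn ℝ C f)
    (hlsc : LowerSemicontinuousOn f C) {w₀ : H} (hw₀ : w₀ ∈ C) :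
    ∃ (g : H →L[ℝ] ℝ) (c : ℝ), ∀ z ∈ C, g z + c ≤ f z := by
  have hconv : Convex ℝ {p : H × ℝ | p.1 ∈ C ∧ f p.1 ≤ p.2} := hcv.convex_epigraph
  have hclosed : IsClosed {p : H × ℝ | p.1 ∈ C ∧ f p.1 ≤ p.2} := by
    refine IsSeqClosed.isClosed ?_
    intro p q hp hq
    have hq1 : Tendsto (fun n => (p n).1) atTop (𝓝 q.1) := (continuous_fst.tendsto q).comp hq
    have hq2 : Tendsto (fun n => (p n).2) atTop (𝓝 q.2) := (continuous_snd.tendsto q).comp hq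
    have hqC : q.1 ∈ C := hCcl.mem_of_tendsto hq1 (Eventually.of_forall fun n => (hp n).1)
    refine ⟨hqC, ?_⟩
    by_contra hlt; push_neg at hlt
    have hm2 : (q.2 + f q.1)/2 < f q.1 := by linarith
    have hev := hlsc q.1 hqC _ hm2
    have htend : Tendsto (fun n => (p n).1) atTop (𝓝[C] q.1) :=
      tendsto_nhdsWithin_of_tendsto_nhds_of_eventually_within _ hq1
        (Eventually.of_forall fun n => (hp n).1)
    have hev2 : ∀ᶠ n in atTop, (q.2 + f q.1)/2 < f (p n).1 := htend.eventually hev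
    have hle : (q.2 + f q.1)/2 ≤ q.2 :=
      ge_of_tendsto hq2 (hev2.mono fun n hn => le_trans hn.le (hp n).2)
    linarith
  have hq₀ : ((w₀, f w₀ - 1) : H × ℝ) ∉ {p : H × ℝ | p.1 ∈ C ∧ f p.1 ≤ p.2} := by
    intro h
    have := h.2
    simp only at this
    linarith
  obtain ⟨Φ, u, hΦq, hΦepi⟩ := geometric_hahn_banach_point_closed hconv hclosed hq₀
  set g : H →L[ℝ] ℝ := Φ.comp (ContinuousLinearMap.inl ℝ H ℝ) with hg
  set α : ℝ := Φ (0, 1) with hα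
  have hsplit : ∀ (z : H) (t : ℝ), Φ (z, t) = g z + t * α := by
    intro z t
    have h1 : ((z, t) : H × ℝ) = (z, (0:ℝ)) + t • ((0:H), (1:ℝ)) := by
      simp [Prod.ext_iff]
    rw [h1, map_add, map_smul]
    simp [hg, hα, ContinuousLinearMap.inl_apply, smul_eq_mul]
  have hαpos : 0 < α := by
    have h1 := hΦepi (w₀, f w₀) ⟨hw₀, le_rfl⟩
    have h2 := hΦq
    rw [hsplit] at h1 h2
    nlinarith
  refine ⟨(-α⁻¹) • g, u / α, ?_⟩
  intro z hz
  have h1 := hΦepi (z, f z) ⟨hz, le_rfl⟩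
  rw [hsplit] at h1
  have heq : (((-α⁻¹) • g) z) + u/α = (u - g z)/α := by
    simp only [ContinuousLinearMap.smul_apply, smul_eq_mul]
    field_simp
    ring
  rw [heq, div_le_iff₀ hαpos]
  nlinarith

set_option maxHeartbeats 4000000 in
theorem stmt_6 {H : Type*} [NormedAddCommGroup H] [InnerProductSpace ℝ H]
    [CompleteSpace H]
    (C : Set H) (hCne : C.Nonempty) (hCcl : IsClosed C) (hCcv : Convex ℝ C)
    (F : H → H → ℝ)
    (hF1 : ∀ x ∈ C, F x x = 0)
    (hF2 : ∀ x ∈ C, ∀ y ∈ C, F x y + F y x ≤ 0)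
    (hF3 : ∀ x ∈ C, ∀ y ∈ C, ∀ z ∈ C,
      limsup (fun t : ℝ => F (t • z + (1 - t) • x) y) (𝓝[>] 0) ≤ F x y)
    (hF4 : ∀ x ∈ C, ConvexOn ℝ C (fun y => F x y)
      ∧ LowerSemicontinuousOn (fun y => F x y) C) :
    ∀ r : ℝ, 0 < r → ∀ x : H,
      ∃ z ∈ C, ∀ y ∈ C, 0 ≤ F z y + (1 / r) * ⟪y - z, z - x⟫ := by
  intro r hr x
  obtain ⟨y₀, hy₀⟩ := hCne
  set ρ := 1/r with hρdef
  have hρ : 0 < ρ := by positivity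
  set T : H → Set H := fun y => {w | w ∈ C ∧ F y w + ρ * ⟪w - y, w - x⟫ ≤ 0} with hT
  have hTclosed : ∀ y ∈ C, IsClosed (T y) := by
    intro y hy
    have hcont : Continuous (fun w : H => ρ * ⟪w - y, w - x⟫) :=
      Continuous.mul continuous_const
        (Continuous.inner (continuous_id.sub continuous_const)
          (continuous_id.sub continuous_const))
    exact aux_sublevel_closed hCcl
      (((hF4 y hy).2).add (hcont.lowerSemicontinuous.lowerSemicontinuousOn C)) 0
  have hTconv : ∀ y ∈ C, Convex ℝ (T y) := by
    intro y hy
    rintro w ⟨hwC, hw⟩ w' ⟨hw'C, hw'⟩ s t hs ht hst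
    refine ⟨hCcv hwC hw'C hs ht hst, ?_⟩
    have hFc := (hF4 y hy).1.2 hwC hw'C hs ht hst
    have hq := aux_quad x y w w' hs ht hst
    simp only [smul_eq_mul] at hFc
    nlinarith [mul_le_mul_of_nonneg_left hq hρ.le, mul_le_mul_of_nonneg_left hw hs,
      mul_le_mul_of_nonneg_left hw' ht]
  have hTbound : ∃ R : ℝ, 0 ≤ R ∧ ∀ w ∈ T y₀, ‖w‖ ≤ R := by
    obtain ⟨g, c, hgc⟩ := aux_minorant hCcl (hF4 y₀ hy₀).1 (hF4 y₀ hy₀).2 hy₀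
    set a := ‖x‖ + ‖y₀‖ + ‖g‖/ρ with ha
    set b := ‖y₀‖*‖x‖ + |c|/ρ with hb
    have hapos : 0 ≤ a := by positivity
    have hbpos : 0 ≤ b := by positivity
    refine ⟨a + b + 1, by positivity, ?_⟩
    rintro w ⟨hwC, hw⟩
    have hmin := hgc w hwC
    have hinner : ⟪w - y₀, w - x⟫ = ⟪w,w⟫ - ⟪w,x⟫ - ⟪y₀,w⟫ + ⟪y₀,x⟫ := by
      simp only [inner_sub_left, inner_sub_right]; ring
    have hww : ⟪w,w⟫ = ‖w‖*‖w‖ := real_inner_self_eq_norm_mul_norm w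
    have h1 : ⟪w,x⟫ ≤ ‖w‖*‖x‖ := real_inner_le_norm w x
    have h2 : ⟪y₀,w⟫ ≤ ‖y₀‖*‖w‖ := real_inner_le_norm y₀ w
    have h3 : -⟪y₀,x⟫ ≤ ‖y₀‖*‖x‖ := by
      have := abs_real_inner_le_norm y₀ x
      have := neg_abs_le (⟪y₀,x⟫ : ℝ)
      linarith
    have h4 : -(g w) ≤ ‖g‖*‖w‖ := by
      have h5 : |g w| ≤ ‖g‖*‖w‖ := by
        have := g.le_opNorm w
        rwa [Real.norm_eq_abs] at this
      have := neg_abs_le (g w)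
      linarith
    -- from membership: ρ * ⟪w - y₀, w - x⟫ ≤ - F y₀ w ≤ -(g w + c)
    have h6 : ρ * ⟪w - y₀, w - x⟫ ≤ -(g w) + |c| := by
      have := neg_abs_le c
      linarith
    have h7 : ρ * ⟪w - y₀, w - x⟫ ≤ ‖g‖*‖w‖ + |c| := by linarith
    have h8 : ⟪w - y₀, w - x⟫ ≤ (‖g‖*‖w‖ + |c|)/ρ :=
      (le_div_iff₀ hρ).2 (by linarith)
    have hdiv : (‖g‖*‖w‖ + |c|)/ρ = (‖g‖/ρ)*‖w‖ + |c|/ρ := by ring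
    rw [hinner, hww, hdiv] at h8
    have h9 : ‖w‖*‖w‖ ≤ a*‖w‖ + b := by rw [ha, hb]; linarith
    nlinarith [norm_nonneg w, h9, hapos, hbpos]
  obtain ⟨R, hR0, hRb⟩ := hTbound
  classical
  have hAne : ∀ S : Finset H, ↑S ⊆ C → ∃ z, z ∈ T y₀ ∧ ∀ y ∈ S, z ∈ T y := by
    intro S hS
    set S' : Finset H := insert y₀ S with hS'
    have hS'C : ∀ y ∈ S', y ∈ C := by
      intro y hy
      rcases Finset.mem_insert.1 hy with h | h
      · exact h ▸ hy₀
      · exact hS h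
    have hcard : 0 < S'.card := Finset.card_pos.2 ⟨y₀, Finset.mem_insert_self _ _⟩
    set e : Fin S'.card → H := fun i => (S'.equivFin.symm i : H) with he
    have hye : ∀ i, e i ∈ C := fun i => hS'C _ (S'.equivFin.symm i).2
    obtain ⟨z, hzC, hz⟩ := aux_step1 hCcl hCcv hF2 hF4 hρ x hcard e hye
    have hall : ∀ y ∈ S', F y z + ρ * ⟪z - y, z - x⟫ ≤ 0 := by
      intro y hy
      have h := hz (S'.equivFin ⟨y, hy⟩)
      simpa [he, Equiv.symm_apply_apply] using h
    exact ⟨z, ⟨hzC, hall y₀ (Finset.mem_insert_self _ _)⟩,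
      fun y hy => ⟨hzC, hall y (Finset.mem_insert_of_mem hy)⟩⟩
  set A : Finset H → Set H := fun S => {w | w ∈ T y₀ ∧ ∀ y ∈ S, w ∈ T y} with hA
  have hAne' : ∀ S : Finset H, ↑S ⊆ C → (A S).Nonempty := by
    intro S hS
    obtain ⟨z, h1, h2⟩ := hAne S hS
    exact ⟨z, h1, h2⟩
  have hAmono : ∀ S S' : Finset H, S ⊆ S' → A S' ⊆ A S :=
    fun S S' hss w hw => ⟨hw.1, fun y hy => hw.2 y (hss hy)⟩
  have hAconv : ∀ S : Finset H, ↑S ⊆ C → Convex ℝ (A S) := by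
    intro S hS
    rintro w ⟨hw0, hwS⟩ w' ⟨hw'0, hw'S⟩ s t hs ht hst
    exact ⟨hTconv y₀ hy₀ hw0 hw'0 hs ht hst,
      fun y hy => hTconv y (hS hy) (hwS y hy) (hw'S y hy) hs ht hst⟩
  set d : Finset H → ℝ := fun S => sInf (norm '' A S) with hd
  have himgne : ∀ S : Finset H, ↑S ⊆ C → (norm '' A S).Nonempty :=
    fun S hS => (hAne' S hS).image _
  have himgbdd : ∀ S : Finset H, BddBelow (norm '' A S) := by
    intro S
    refine ⟨0, ?_⟩
    rintro v ⟨w, _, rfl⟩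
    exact norm_nonneg w
  have hd0 : ∀ S : Finset H, ↑S ⊆ C → 0 ≤ d S := by
    intro S hS
    refine le_csInf (himgne S hS) ?_
    rintro v ⟨w, _, rfl⟩
    exact norm_nonneg w
  have hdR : ∀ S : Finset H, ↑S ⊆ C → d S ≤ R := by
    intro S hS
    obtain ⟨w, hw⟩ := hAne' S hS
    exact le_trans (csInf_le (himgbdd S) ⟨w, hw, rfl⟩) (hRb w hw.1)
  have hdmono : ∀ S S' : Finset H, ↑S' ⊆ C → S ⊆ S' → d S ≤ d S' :=
    fun S S' hS' hss =>
      csInf_le_csInf (himgbdd S) (himgne S' hS') (image_mono (hAmono S S' hss))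
  haveI hne𝒮 : Nonempty {S : Finset H // ↑S ⊆ C} := ⟨⟨∅, by simp⟩⟩
  set DD := ⨆ S : {S : Finset H // ↑S ⊆ C}, d S.1 with hDD
  have hbdd𝒮 : BddAbove (Set.range fun S : {S : Finset H // ↑S ⊆ C} => d S.1) := by
    refine ⟨R, ?_⟩
    rintro v ⟨S, rfl⟩
    exact hdR S.1 S.2
  have hdDD : ∀ S : {S : Finset H // ↑S ⊆ C}, d S.1 ≤ DD := fun S => le_ciSup hbdd𝒮 S
  have hDD0 : 0 ≤ DD := le_trans (hd0 ∅ (by simp)) (hdDD ⟨∅, by simp⟩)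
  have hpar : ∀ (S S' : Finset H), ↑S ⊆ C → ↑S' ⊆ C → S ⊆ S' → ∀ a : ℝ, 0 < a →
      DD - a ≤ d S → ∀ z ∈ A S, ∀ w ∈ A S', ‖z‖ ≤ DD + a → ‖w‖ ≤ DD + a →
      ‖z - w‖*‖z - w‖ ≤ 16*a*(DD+a) := by
    intro S S' hS hS' hss a ha hdS z hz w hw hzn hwn
    have hwS : w ∈ A S := hAmono S S' hss hw
    have hmid : (1/2:ℝ) • z + (1/2:ℝ) • w ∈ A S :=
      hAconv S hS hz hwS (by norm_num) (by norm_num) (by norm_num)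
    have hmidn : d S ≤ ‖(1/2:ℝ) • z + (1/2:ℝ) • w‖ := csInf_le (himgbdd S) ⟨_, hmid, rfl⟩
    have heqm : (1/2:ℝ) • z + (1/2:ℝ) • w = (1/2:ℝ) • (z + w) := by module
    have hhalf : ‖(1/2:ℝ)‖ = 1/2 := by rw [Real.norm_eq_abs]; norm_num
    rw [heqm, norm_smul, hhalf] at hmidn
    have hds := hd0 S hS
    have hdDD' : d S ≤ DD := hdDD ⟨S, hS⟩
    have hpl := parallelogram_law_with_norm ℝ z w
    have hsq : (2*d S)*(2*d S) ≤ ‖z+w‖*‖z+w‖ :=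
      mul_self_le_mul_self (by linarith) (by linarith)
    have hzsq : ‖z‖*‖z‖ ≤ (DD+a)*(DD+a) := mul_self_le_mul_self (norm_nonneg z) hzn
    have hwsq : ‖w‖*‖w‖ ≤ (DD+a)*(DD+a) := mul_self_le_mul_self (norm_nonneg w) hwn
    have hfac : (DD+a-d S) * (DD+a+d S) ≤ (2*a) * (2*(DD+a)) :=
      mul_le_mul (by linarith) (by linarith) (by linarith) (by linarith)
    nlinarith [hpl, hsq, hzsq, hwsq, hfac]
  have hsel : ∀ k : ℕ, ∃ S : {S : Finset H // ↑S ⊆ C}, DD - 1/(k+1) < d S.1 := by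
    intro k
    have hpos : 0 < 1/((k:ℝ)+1) := by positivity
    exact exists_lt_of_lt_ciSup (by linarith : DD - 1/((k:ℝ)+1) < DD)
  choose Sel hSel using hsel
  obtain ⟨Tn, hTn0, hTn_succ⟩ : ∃ Tn : ℕ → {S : Finset H // ↑S ⊆ C}, Tn 0 = Sel 0 ∧
      ∀ k, (Tn (k+1)).1 = (Tn k).1 ∪ (Sel (k+1)).1 := by
    refine ⟨fun k => Nat.rec (Sel 0) (fun k Tk => ⟨Tk.1 ∪ (Sel (k+1)).1, by
      rw [Finset.coe_union]; exact union_subset Tk.2 (Sel (k+1)).2⟩) k, rfl, fun k => rfl⟩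
  have hTnmono : ∀ j k : ℕ, j ≤ k → (Tn j).1 ⊆ (Tn k).1 := by
    intro j k hjk
    induction k with
    | zero => rw [Nat.le_zero] at hjk; subst hjk; exact Finset.Subset.refl _
    | succ k ih =>
      by_cases h : j ≤ k
      · exact (ih h).trans (by rw [hTn_succ]; exact Finset.subset_union_left)
      · have hj : j = k+1 := by omega
        subst hj; exact Finset.Subset.refl _
  have hTnSel : ∀ k, (Sel k).1 ⊆ (Tn k).1 := by
    intro k
    cases k with
    | zero => rw [hTn0]
    | succ k => rw [hTn_succ]; exact Finset.subset_union_right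
  have hdTn : ∀ k : ℕ, DD - 1/(k+1) < d (Tn k).1 :=
    fun k => lt_of_lt_of_le (hSel k) (hdmono _ _ (Tn k).2 (hTnSel k))
  have hq : ∀ k : ℕ, ∃ w ∈ A (Tn k).1, ‖w‖ < d (Tn k).1 + 1/(k+1) := by
    intro k
    have hpos : 0 < 1/((k:ℝ)+1) := by positivity
    obtain ⟨v, ⟨w, hw, rfl⟩, hv⟩ := exists_lt_of_csInf_lt (himgne _ (Tn k).2)
      (show d (Tn k).1 < d (Tn k).1 + 1/(k+1) by linarith)
    exact ⟨w, hw, hv⟩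
  choose q hqA hqn using hq
  have hqbound : ∀ k, ‖q k‖ ≤ DD + 1/(k+1) :=
    fun k => le_trans (hqn k).le (by linarith [hdDD (Tn k)])
  have hmono : ∀ j k : ℕ, j ≤ k → 1/((k:ℝ)+1) ≤ 1/((j:ℝ)+1) := by
    intro j k hjk
    apply one_div_le_one_div_of_le (by positivity)
    have : (j:ℝ) ≤ (k:ℝ) := Nat.cast_le.2 hjk
    linarith
  have hest : ∀ j k : ℕ, j ≤ k → ‖q j - q k‖*‖q j - q k‖ ≤ 16*(1/(j+1))*(DD+1/(j+1)) := by
    intro j k hjk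
    exact hpar (Tn j).1 (Tn k).1 (Tn j).2 (Tn k).2 (hTnmono j k hjk) (1/(j+1)) (by positivity)
      (hdTn j).le (q j) (hqA j) (q k) (hqA k) (hqbound j)
      (le_trans (hqbound k) (by linarith [hmono j k hjk]))
  obtain ⟨bseq, hbseq⟩ : ∃ b : ℕ → ℝ, ∀ N : ℕ, b N = Real.sqrt (16*(1/(N+1))*(DD+1/(N+1))) :=
    ⟨_, fun N => rfl⟩
  have hble : ∀ j k : ℕ, j ≤ k → ‖q j - q k‖ ≤ bseq j := by
    intro j k hjk
    rw [hbseq j, ← Real.sqrt_mul_self (norm_nonneg (q j - q k))]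
    exact Real.sqrt_le_sqrt (hest j k hjk)
  have hbmono : ∀ j k : ℕ, j ≤ k → bseq k ≤ bseq j := by
    intro j k hjk
    rw [hbseq j, hbseq k]
    apply Real.sqrt_le_sqrt
    have h1 := hmono j k hjk
    have h2 : 0 < 1/((k:ℝ)+1) := by positivity
    nlinarith
  have hb0 : Tendsto bseq atTop (𝓝 0) := by
    have h1 : Tendsto (fun N : ℕ => 1/((N:ℝ)+1)) atTop (𝓝 0) :=
      tendsto_one_div_add_atTop_nhds_zero_nat
    have h2 : Tendsto (fun N : ℕ => 16*(1/((N:ℝ)+1))*(DD+1/((N:ℝ)+1))) atTop (𝓝 0) := by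
      have := ((tendsto_const_nhds (x := (16:ℝ)) (f := atTop (α := ℕ))).mul h1).mul
        ((tendsto_const_nhds (x := DD) (f := atTop (α := ℕ))).add h1)
      simpa using this
    have h3 := (Real.continuous_sqrt.tendsto 0).comp h2
    have h4 : bseq = fun N : ℕ => Real.sqrt (16*(1/(N+1))*(DD+1/(N+1))) := funext hbseq
    rw [h4]
    simpa [Function.comp_def, Real.sqrt_zero] using h3
  have hcauchy : CauchySeq q := by
    apply cauchySeq_of_le_tendsto_0 bseq ?_ hb0
    intro n m N hn hm
    have key : ∀ n m : ℕ, N ≤ n → n ≤ m → dist (q n) (q m) ≤ bseq N := by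
      intro n m hn hnm
      rw [dist_eq_norm]
      exact le_trans (hble n m hnm) (hbmono N n hn)
    rcases le_total n m with h | h
    · exact key n m hn h
    · rw [dist_comm]; exact key m n hm h
  obtain ⟨zs, hzs⟩ := cauchySeq_tendsto_of_complete hcauchy
  have hzsC : zs ∈ C :=
    hCcl.mem_of_tendsto hzs (Eventually.of_forall fun k => (hqA k).1.1)
  have hzT : ∀ y ∈ C, zs ∈ T y := by
    intro y hy
    have hinsC : ∀ k : ℕ, ↑(insert y (Tn k).1) ⊆ C := by
      intro k
      rw [Finset.coe_insert]
      exact Set.insert_subset hy (Tn k).2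
    have hWk : ∀ k : ℕ, ∃ w ∈ A (insert y (Tn k).1), ‖w‖ < d (insert y (Tn k).1) + 1/(k+1) := by
      intro k
      have hpos : 0 < 1/((k:ℝ)+1) := by positivity
      obtain ⟨v, ⟨w, hw, rfl⟩, hv⟩ := exists_lt_of_csInf_lt (himgne _ (hinsC k))
        (show d (insert y (Tn k).1) < d (insert y (Tn k).1) + 1/(k+1) by linarith)
      exact ⟨w, hw, hv⟩
    choose wseq hwA hwn using hWk
    have hwTy : ∀ k, wseq k ∈ T y := fun k => (hwA k).2 y (Finset.mem_insert_self _ _)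
    have hwbound : ∀ k, ‖wseq k‖ ≤ DD + 1/(k+1) :=
      fun k => le_trans (hwn k).le (by linarith [hdDD ⟨_, hinsC k⟩])
    have hdistk : ∀ k : ℕ, ‖q k - wseq k‖ ≤ bseq k := by
      intro k
      have h := hpar (Tn k).1 (insert y (Tn k).1) (Tn k).2 (hinsC k)
        (Finset.subset_insert _ _) (1/(k+1)) (by positivity) (hdTn k).le
        (q k) (hqA k) (wseq k) (hwA k) (hqbound k) (hwbound k)
      rw [hbseq k, ← Real.sqrt_mul_self (norm_nonneg (q k - wseq k))]
      exact Real.sqrt_le_sqrt h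
    have hdist0 : Tendsto (fun k => dist (q k) (wseq k)) atTop (𝓝 0) := by
      apply squeeze_zero (fun k => dist_nonneg) (fun k => ?_) hb0
      rw [dist_eq_norm]; exact hdistk k
    have hwlim : Tendsto wseq atTop (𝓝 zs) := hzs.congr_dist hdist0
    exact (hTclosed y hy).mem_of_tendsto hwlim (Eventually.of_forall hwTy)
  -- Minty conversion
  refine ⟨zs, hzsC, ?_⟩
  intro y hy
  have hcc : ∀ t : ℝ, t ∈ Ioo (0:ℝ) 1 → t • y + (1-t) • zs ∈ C := by
    intro t ht
    exact hCcv hy hzsC ht.1.le (by linarith [ht.2]) (by ring)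
  set c := ⟪y - zs, zs - x⟫ with hc
  have hlow : ∀ t ∈ Ioo (0:ℝ) 1, -((1-t)*(ρ*c)) ≤ F (t • y + (1-t) • zs) y := by
    intro t ht
    have hytC := hcc t ht
    obtain ⟨_, h1⟩ := hzT (t • y + (1-t) • zs) hytC
    have h2 : ⟪zs - (t • y + (1-t) • zs), zs - x⟫ = -(t*c) := by
      have he : zs - (t • y + (1-t) • zs) = t • (zs - y) := by module
      rw [he, real_inner_smul_left, hc, show zs - y = -(y - zs) from by module,
        inner_neg_left]
      ring
    rw [h2] at h1
    have h3 : F (t • y + (1-t) • zs) zs ≤ ρ*(t*c) := by nlinarith [h1]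
    have h0 : F (t • y + (1-t) • zs) (t • y + (1-t) • zs) = 0 := hF1 _ hytC
    have hcv := (hF4 _ hytC).1.2 hy hzsC ht.1.le
      (by linarith [ht.2] : (0:ℝ) ≤ 1-t) (by ring)
    simp only [smul_eq_mul] at hcv
    rw [h0] at hcv
    have h4 : (1-t) * F (t • y + (1-t) • zs) zs ≤ (1-t)*(ρ*(t*c)) :=
      mul_le_mul_of_nonneg_left h3 (by linarith [ht.2])
    have h5 : t * (-((1-t)*(ρ*c))) ≤ t * F (t • y + (1-t) • zs) y := by nlinarith
    exact le_of_mul_le_mul_left h5 ht.1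
  have hup : ∀ t ∈ Ioo (0:ℝ) 1, F (t • y + (1-t) • zs) y
      ≤ max (F y y) (F y zs) - 2 * F y ((1/2:ℝ) • y + (1/2:ℝ) • zs) := by
    intro t ht
    have hytC := hcc t ht
    have hyt'C : (1-t) • y + t • zs ∈ C := hCcv hy hzsC (by linarith [ht.2]) ht.1.le (by ring)
    have hconv1 := (hF4 y hy).1.2 hytC hyt'C (by norm_num : (0:ℝ) ≤ 1/2)
      (by norm_num : (0:ℝ) ≤ 1/2) (by norm_num)
    rw [show (1/2:ℝ) • (t • y + (1-t) • zs) + (1/2:ℝ) • ((1-t) • y + t • zs)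
      = (1/2:ℝ) • y + (1/2:ℝ) • zs from by module] at hconv1
    simp only [smul_eq_mul] at hconv1
    have hconv2 := (hF4 y hy).1.2 hy hzsC (by linarith [ht.2] : (0:ℝ) ≤ 1-t)
      ht.1.le (by ring)
    simp only [smul_eq_mul] at hconv2
    have hup' : F y ((1-t) • y + t • zs) ≤ max (F y y) (F y zs) := by
      have hmax1 : F y y ≤ max (F y y) (F y zs) := le_max_left _ _
      have hmax2 : F y zs ≤ max (F y y) (F y zs) := le_max_right _ _
      nlinarith [ht.1, ht.2]
    have hA2 := hF2 (t • y + (1-t) • zs) hytC y hy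
    linarith [hconv1, hA2, hup']
  have hmemIoo : ∀ᶠ t in 𝓝[>](0:ℝ), t ∈ Ioo (0:ℝ) 1 :=
    Ioo_mem_nhdsGT_of_mem (by norm_num : (0:ℝ) ∈ Ico (0:ℝ) 1)
  have hbddab : IsBoundedUnder (· ≤ ·) (𝓝[>](0:ℝ)) (fun t => F (t • y + (1-t) • zs) y) :=
    ⟨max (F y y) (F y zs) - 2 * F y ((1/2:ℝ) • y + (1/2:ℝ) • zs),
      eventually_map.2 (hmemIoo.mono fun t ht => hup t ht)⟩
  have hbddbe : IsBoundedUnder (· ≥ ·) (𝓝[>](0:ℝ)) (fun t => F (t • y + (1-t) • zs) y) := by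
    refine ⟨-|ρ*c|, eventually_map.2 (hmemIoo.mono fun t ht => ?_)⟩
    have h1 := hlow t ht
    have h2 : (1-t)*(ρ*c) ≤ |ρ*c| := by
      rcases le_or_gt 0 (ρ*c) with h | h
      · nlinarith [le_abs_self (ρ*c), ht.1, ht.2]
      · nlinarith [abs_nonneg (ρ*c), ht.1, ht.2]
    simp only [ge_iff_le]
    linarith
  have htendlow : Tendsto (fun t : ℝ => -((1-t)*(ρ*c))) (𝓝[>](0:ℝ)) (𝓝 (-(ρ*c))) := by
    have hcont : Continuous (fun t : ℝ => -((1-t)*(ρ*c))) :=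
      ((continuous_const.sub continuous_id).mul continuous_const).neg
    have h1 := hcont.tendsto 0
    rw [show -((1-(0:ℝ))*(ρ*c)) = -(ρ*c) from by ring] at h1
    exact h1.mono_left nhdsWithin_le_nhds
  have hliminf2 : -(ρ*c) ≤ liminf (fun t => F (t • y + (1-t) • zs) y) (𝓝[>](0:ℝ)) := by
    rw [← htendlow.liminf_eq]
    exact liminf_le_liminf (hmemIoo.mono fun t ht => hlow t ht)
      htendlow.isBoundedUnder_ge hbddab.isCoboundedUnder_ge
  have hll : liminf (fun t => F (t • y + (1-t) • zs) y) (𝓝[>](0:ℝ))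
      ≤ limsup (fun t => F (t • y + (1-t) • zs) y) (𝓝[>](0:ℝ)) :=
    liminf_le_limsup hbddab hbddbe
  have h3 := hF3 zs hzsC y hy y hy
  have hfinal : -(ρ*c) ≤ F zs y := le_trans hliminf2 (le_trans hll h3)
  linarith [hfinal]
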